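/- arXiv:1302.1464 — 3 statements merged into one kernel-verified Lean document; each statement's English description precedes it below -/
import Mathlib

section
/- Let $\mathcal{O}$ be a commutative ring and let $a,b,c,d,e,f,g,h,i \in \mathcal{O}$. Suppose $z,w$ are elements of an $\mathcal{O}$-algebra which is free as an $\mathcal{O}$-module with basis $\{1,z,w\}$, satisfying $z^2 = g + az + bw$, $zw = h + ez + fw$, and $w^2 = i + cz + dw$. Then $g = be + f^2 - af - bd$, $h = bc - ef$, and $i = e^2 + cf - ac - de$. -/
theorem stmt_0 (O : Type*) [CommRing O] (A : Type*) [CommRing A] [Algebra O A]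
    (B : Module.Basis (Fin 3) O A) (z w : A) (a b c d e f g h i : O)
    (hB0 : B 0 = 1) (hB1 : B 1 = z) (hB2 : B 2 = w)
    (hz2 : z ^ 2 = algebraMap O A g + a • z + b • w)
    (hzw : z * w = algebraMap O A h + e • z + f • w)
    (hw2 : w ^ 2 = algebraMap O A i + c • z + d • w) :
    g = b * e + f ^ 2 - a * f - b * d ∧ h = b * c - e * f ∧
      i = e ^ 2 + c * f - a * c - d * e := by
  have coeff : ∀ p q r p' q' r' : O,
      p • (1:A) + q • z + r • w = p' • (1:A) + q' • z + r' • w →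
      p = p' ∧ q = q' ∧ r = r' := by
    intro p q r p' q' r' hpq
    rw [← hB0, ← hB1, ← hB2] at hpq
    have h' := congrArg B.repr hpq
    simp only [map_add, map_smul, Module.Basis.repr_self] at h'
    refine ⟨?_, ?_, ?_⟩
    · simpa [Finsupp.single_apply] using DFunLike.congr_fun h' 0
    · simpa [Finsupp.single_apply] using DFunLike.congr_fun h' 1
    · simpa [Finsupp.single_apply] using DFunLike.congr_fun h' 2
  have E1 : (e*g+f*h) • (1:A) + (h+a*e+e*f) • z + (b*e+f*f) • w
      = (a*h+b*i) • (1:A) + (a*e+b*c) • z + (g+a*f+b*d) • w := by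
    simp only [Algebra.smul_def, map_add, map_mul] at hz2 hzw hw2 ⊢
    linear_combination (w - algebraMap O A e) * hz2 + (algebraMap O A a - algebraMap O A f - z) * hzw + algebraMap O A b * hw2
  have E2 : (c*g+d*h) • (1:A) + (i+a*c+d*e) • z + (b*c+d*f) • w
      = (e*h+f*i) • (1:A) + (e*e+c*f) • z + (h+e*f+d*f) • w := by
    simp only [Algebra.smul_def, map_add, map_mul] at hz2 hzw hw2 ⊢
    linear_combination (-algebraMap O A c) * hz2
      + (algebraMap O A e + w - algebraMap O A d) * hzw
      + (algebraMap O A f - z) * hw2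
  obtain ⟨_, k2, k3⟩ := coeff _ _ _ _ _ _ E1
  obtain ⟨_, k5, _⟩ := coeff _ _ _ _ _ _ E2
  exact ⟨by linear_combination -k3, by linear_combination k2, by linear_combination k5⟩
end

section
/- Let $R$ be a commutative ring and $a,b,c,d \in R$. Let $F = z^2 - 2(a^2-bd) - az - bw$, $G = zw + (ad-bc) + dz + aw$, $H = w^2 - 2(d^2-ac) - cz - dw$ in $R[z,w]$. Then the polynomial $z^3 + 3(bd - a^2)z + (3abd - 2a^3 - b^2c)$ lies in the ideal of $R[z,w]$ generated by $F$, $G$, and $H$. -/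
open MvPolynomial

theorem stmt_4 (R : Type*) [CommRing R] (a b c d : R) :
    let z : MvPolynomial (Fin 2) R := X 0
    let w : MvPolynomial (Fin 2) R := X 1
    let F := z ^ 2 - C (2 * (a ^ 2 - b * d)) - C a * z - C b * w
    let G := z * w + C (a * d - b * c) + C d * z + C a * w
    let H := w ^ 2 - C (2 * (d ^ 2 - a * c)) - C c * z - C d * w
    z ^ 3 + C (3 * (b * d - a ^ 2)) * z + C (3 * a * b * d - 2 * a ^ 3 - b ^ 2 * c) ∈
      Ideal.span {F, G, H} := by
  intro z w F G H
  have hF : F ∈ Ideal.span {F, G, H} := Ideal.subset_span (by simp)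
  have hG : G ∈ Ideal.span {F, G, H} := Ideal.subset_span (by simp)
  have key : z ^ 3 + C (3 * (b * d - a ^ 2)) * z + C (3 * a * b * d - 2 * a ^ 3 - b ^ 2 * c)
      = (z + C a) * F + C b * G := by
    simp only [F, G, C_mul, C_add, C_sub, C_pow, map_ofNat]
    ring
  rw [key]
  exact Ideal.add_mem _ (Ideal.mul_mem_left _ _ hF) (Ideal.mul_mem_left _ _ hG)
end

section
/- The polynomial $z^3 + y^5 + x^2 y^2 \in \mathbb{C}[x,y,z]$ is Newton non-degenerate: for every compact face $F$ of its Newton polygon, the face function $\sum_{v \in F} a_v \mathbf{z}^v$ has no common zero with all of its partial derivatives in the torus $(\mathbb{C}^*)^3$. -/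
open MvPolynomial

noncomputable def w1 : Fin 3 →₀ ℕ := Finsupp.single 2 3
noncomputable def w2 : Fin 3 →₀ ℕ := Finsupp.single 1 5
noncomputable def w3 : Fin 3 →₀ ℕ := Finsupp.single 0 2 + Finsupp.single 1 2

lemma hne12 : w1 ≠ w2 := by intro h; have := DFunLike.congr_fun h 1; simp [w1, w2] at this
lemma hne13 : w1 ≠ w3 := by intro h; have := DFunLike.congr_fun h 1; simp [w1, w3] at this
lemma hne23 : w2 ≠ w3 := by intro h; have := DFunLike.congr_fun h 0; simp [w2, w3] at this

lemma hfeq : (X 2 ^ 3 + X 1 ^ 5 + X 0 ^ 2 * X 1 ^ 2 : MvPolynomial (Fin 3) ℂ)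
    = monomial w1 1 + monomial w2 1 + monomial w3 1 := by
  simp [w1, w2, w3, X_pow_eq_monomial, monomial_mul]

lemma hsupp : (X 2 ^ 3 + X 1 ^ 5 + X 0 ^ 2 * X 1 ^ 2 : MvPolynomial (Fin 3) ℂ).support
    = {w1, w2, w3} := by
  rw [hfeq]
  ext v
  simp only [MvPolynomial.mem_support_iff, coeff_add, coeff_monomial, Finset.mem_insert,
    Finset.mem_singleton]
  rcases eq_or_ne w1 v with h1 | h1 <;> rcases eq_or_ne w2 v with h2 | h2 <;>
      rcases eq_or_ne w3 v with h3 | h3 <;>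
    first
      | (exfalso; exact hne12 (h1.trans h2.symm))
      | (exfalso; exact hne13 (h1.trans h3.symm))
      | (exfalso; exact hne23 (h2.trans h3.symm))
      | simp_all [eq_comm]

lemma hc1 : coeff w1 (X 2 ^ 3 + X 1 ^ 5 + X 0 ^ 2 * X 1 ^ 2 : MvPolynomial (Fin 3) ℂ) = 1 := by
  rw [hfeq]; simp [coeff_monomial, hne12, hne13, (hne12).symm, (hne13).symm]
lemma hc2 : coeff w2 (X 2 ^ 3 + X 1 ^ 5 + X 0 ^ 2 * X 1 ^ 2 : MvPolynomial (Fin 3) ℂ) = 1 := by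
  rw [hfeq]; simp [coeff_monomial, hne12, Ne.symm hne23]
lemma hc3 : coeff w3 (X 2 ^ 3 + X 1 ^ 5 + X 0 ^ 2 * X 1 ^ 2 : MvPolynomial (Fin 3) ℂ) = 1 := by
  rw [hfeq]; simp [coeff_monomial, hne13, hne23]

lemma evd3 (p : Fin 3 → ℂ) :
    eval p (pderiv 0 (monomial w3 (1 : ℂ))) = 2 * p 0 * p 1 ^ 2 := by
  rw [pderiv_monomial]
  have h : w3 - Finsupp.single 0 1 = Finsupp.single 0 1 + Finsupp.single 1 2 := by
    ext i; fin_cases i <;> simp [w3]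
  rw [h, eval_monomial]
  simp [Finsupp.prod_add_index, Finsupp.prod_single_index, w3, Fin.prod_univ_three,
    Finsupp.single_apply]
  ring

lemma evd2 (p : Fin 3 → ℂ) :
    eval p (pderiv 1 (monomial w2 (1 : ℂ))) = 5 * p 1 ^ 4 := by
  rw [pderiv_monomial]
  have h : w2 - Finsupp.single 1 1 = Finsupp.single 1 4 := by
    ext i; fin_cases i <;> simp [w2]
  rw [h, eval_monomial]
  simp [Finsupp.prod_single_index, w2, Finsupp.single_apply]


/-- Newton non-degeneracy of `z^3 + y^5 + x^2 y^2`: for every strictly positive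
weight vector `u` (these are exactly the normals of the compact faces of the
Newton polygon), the face function of the corresponding face has no common zero
with all of its partial derivatives in the torus `(ℂ*)^3`. -/
theorem stmt_9 :
    let f : MvPolynomial (Fin 3) ℂ := X 2 ^ 3 + X 1 ^ 5 + X 0 ^ 2 * X 1 ^ 2
    ∀ u : Fin 3 → ℝ, (∀ i, 0 < u i) →
      ∀ m : ℝ,
        (∀ v ∈ f.support, m ≤ ∑ i, u i * (v i : ℝ)) →
        (∃ v ∈ f.support, (∑ i, u i * (v i : ℝ)) = m) →
        let faceFun : MvPolynomial (Fin 3) ℂ :=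
          ∑ v ∈ f.support.filter (fun v => (∑ i, u i * (v i : ℝ)) = m),
            monomial v (coeff v f)
        ¬ ∃ p : Fin 3 → ℂ, (∀ i, p i ≠ 0) ∧ eval p faceFun = 0 ∧
            ∀ i, eval p (pderiv i faceFun) = 0 := by
  intro f u hu m hle hmem faceFun
  rintro ⟨p, hp, hev, hder⟩
  set T := f.support.filter (fun v => (∑ i, u i * (v i : ℝ)) = m) with hT
  have hTsub : ∀ v ∈ T, v = w1 ∨ v = w2 ∨ v = w3 := by
    intro v hv
    have h := (Finset.mem_filter.mp hv).1
    rw [show f.support = {w1, w2, w3} from hsupp] at h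
    simpa using h
  by_cases h3 : w3 ∈ T
  · -- x-derivative nonzero
    have h0 := hder 0
    rw [show faceFun = ∑ v ∈ T, monomial v (coeff v f) from rfl, map_sum, map_sum] at h0
    rw [Finset.sum_eq_single_of_mem w3 h3 ?_] at h0
    · rw [show coeff w3 f = 1 from hc3, evd3] at h0
      simp [mul_eq_zero, pow_eq_zero_iff, hp 0, hp 1] at h0
    · intro v hv hne
      rcases hTsub v hv with rfl | rfl | rfl
      · rw [pderiv_monomial]; simp [w1, Finsupp.single_apply]
      · rw [pderiv_monomial]; simp [w2, Finsupp.single_apply]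
      · exact absurd rfl hne
  · by_cases h2 : w2 ∈ T
    · -- y-derivative nonzero
      have h0 := hder 1
      rw [show faceFun = ∑ v ∈ T, monomial v (coeff v f) from rfl, map_sum, map_sum] at h0
      rw [Finset.sum_eq_single_of_mem w2 h2 ?_] at h0
      · rw [show coeff w2 f = 1 from hc2, evd2] at h0
        simp [mul_eq_zero, pow_eq_zero_iff, hp 1] at h0
      · intro v hv hne
        rcases hTsub v hv with rfl | rfl | rfl
        · rw [pderiv_monomial]; simp [w1, Finsupp.single_apply]
        · exact absurd rfl hne
        · exact absurd hv h3
    · -- T = {w1}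
      obtain ⟨v0, hv0s, hv0m⟩ := hmem
      have hv0T : v0 ∈ T := Finset.mem_filter.mpr ⟨hv0s, hv0m⟩
      have hv01 : v0 = w1 := by
        rcases hTsub v0 hv0T with h | h | h
        · exact h
        · exact absurd (h ▸ hv0T) h2
        · exact absurd (h ▸ hv0T) h3
      subst hv01
      rw [show faceFun = ∑ v ∈ T, monomial v (coeff v f) from rfl, map_sum] at hev
      rw [Finset.sum_eq_single_of_mem w1 hv0T ?_] at hev
      · rw [show coeff w1 f = 1 from hc1, eval_monomial] at hev
        rw [show w1 = Finsupp.single 2 3 from rfl, Finsupp.prod_single_index (by simp)] at hev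
        simp at hev
        exact hp 2 hev
      · intro v hv hne
        rcases hTsub v hv with rfl | rfl | rfl
        · exact absurd rfl hne
        · exact absurd hv h2
        · exact absurd hv h3
end
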